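/- arXiv:2007.14068 — 4 statements merged into one kernel-verified Lean document; each statement's English description precedes it below -/
import Mathlib

section
/- For any nonnegative integer k and any point x_K in ℝ³, the space of vector-valued polynomials of degree at most k on ℝ³ decomposes as a direct sum: P_k(ℝ³;ℝ³) = ∇P_{k+1}(ℝ³) ⊕ ((x − x_K) × P_{k−1}(ℝ³;ℝ³)), where the second summand is the set of functions of the form x ↦ (x − x_K) × q(x) with q a vector polynomial of degree at most k−1. -/
open MeasureTheory

noncomputable section

abbrev V3 := Fin 3 → ℝ

def pd (i : Fin 3) (f : V3 → ℝ) (x : V3) : ℝ := fderiv ℝ f x (Pi.single i 1)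

def grad (f : V3 → ℝ) (x : V3) : V3 := fun i => pd i f x

def curl (v : V3 → V3) (x : V3) : V3 :=
  ![pd 1 (fun y => v y 2) x - pd 2 (fun y => v y 1) x,
    pd 2 (fun y => v y 0) x - pd 0 (fun y => v y 2) x,
    pd 0 (fun y => v y 1) x - pd 1 (fun y => v y 0) x]

def divg (v : V3 → V3) (x : V3) : ℝ := ∑ i, pd i (fun y => v y i) x

def cross3 (a b : V3) : V3 :=
  ![a 1 * b 2 - a 2 * b 1, a 2 * b 0 - a 0 * b 2, a 0 * b 1 - a 1 * b 0]

def dot3 (a b : V3) : ℝ := ∑ i, a i * b i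

def IsPolyDeg (k : ℕ) (f : V3 → ℝ) : Prop :=
  ∃ p : MvPolynomial (Fin 3) ℝ, p.totalDegree ≤ k ∧ ∀ x, f x = MvPolynomial.eval x p

def IsPolyDegV (k : ℕ) (v : V3 → V3) : Prop := ∀ i, IsPolyDeg k fun x => v x i

def Wmem (k : ℕ) (xK : V3) (v : V3 → V3) : Prop :=
  ∃ q r, IsPolyDeg (k + 1) q ∧ IsPolyDegV 1 r ∧ ∀ x, v x = grad q x + cross3 (x - xK) (r x)

def T2 : Set (ℝ × ℝ) := {p | 0 ≤ p.1 ∧ 0 ≤ p.2 ∧ p.1 + p.2 ≤ 1}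

def PoincareOp (xK : V3) (q : V3 → V3) (x : V3) : V3 :=
  - cross3 (x - xK) (∫ t in (0:ℝ)..1, t • q (t • (x - xK) + xK))


-- HELPERS START

open MvPolynomial

abbrev P3 := MvPolynomial (Fin 3) ℝ



def gradD (p : MvPolynomial (Fin 3) ℝ) (x : V3) : V3 →L[ℝ] ℝ :=
  ∑ i, eval x (pderiv i p) • (ContinuousLinearMap.proj i : V3 →L[ℝ] ℝ)

theorem hasFDerivAt_eval (p : MvPolynomial (Fin 3) ℝ) (x : V3) :
    HasFDerivAt (fun y : V3 => eval y p) (gradD p x) x := by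
  induction p using MvPolynomial.induction_on with
  | C a =>
      simp only [eval_C]
      have : gradD (C a) x = 0 := by simp [gradD, pderiv_C]
      rw [this]
      exact hasFDerivAt_const a x
  | add p q hp hq =>
      have : gradD (p + q) x = gradD p x + gradD q x := by
        simp [gradD, map_add, add_smul, Finset.sum_add_distrib]
      rw [this]
      simp only [map_add]
      exact hp.add hq
  | mul_X p i hp =>
      have hXi : HasFDerivAt (fun y : V3 => y i)
          (ContinuousLinearMap.proj i : V3 →L[ℝ] ℝ) x :=
        (ContinuousLinearMap.proj i : V3 →L[ℝ] ℝ).hasFDerivAt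
      have h := hp.mul hXi
      have he : gradD (p * X i) x
          = eval x p • (ContinuousLinearMap.proj i : V3 →L[ℝ] ℝ) + x i • gradD p x := by
        ext v
        simp only [gradD, ContinuousLinearMap.add_apply, ContinuousLinearMap.smul_apply,
          ContinuousLinearMap.sum_apply, ContinuousLinearMap.proj_apply, smul_eq_mul,
          pderiv_mul, map_add, map_mul, eval_X, Finset.mul_sum]
        rw [Finset.sum_congr rfl (fun j _ => add_mul _ _ _), Finset.sum_add_distrib, add_comm]
        congr 1
        · rw [Finset.sum_eq_single i]
          · simp [pderiv_X_self]
          · intro j _ hj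
            rw [show pderiv j (X i : MvPolynomial (Fin 3) ℝ) = 0 from pderiv_X_of_ne hj.symm]
            simp
          · simp
        · apply Finset.sum_congr rfl
          intro j _
          ring
      rw [he]
      simp only [eval_mul, eval_X]
      exact h

theorem pd_eval (p : MvPolynomial (Fin 3) ℝ) (i : Fin 3) (x : V3) :
    pd i (fun y => eval y p) x = eval x (pderiv i p) := by
  rw [pd, (hasFDerivAt_eval p x).fderiv]
  simp [gradD, ContinuousLinearMap.proj_apply, Pi.single_apply, Finset.sum_ite_eq']

-- degree of pderiv
theorem tdeg_pderiv_le {p : P3} {n : ℕ} (i : Fin 3) (h : p.totalDegree ≤ n + 1) :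
    (pderiv i p).totalDegree ≤ n := by
  conv_lhs => rw [p.as_sum]
  rw [map_sum]
  refine MvPolynomial.totalDegree_finsetSum_le (fun d hd => ?_)
  rw [pderiv_monomial]
  by_cases hdi : d i = 0
  · rw [show (coeff d p * (d i : ℝ)) = 0 by simp [hdi], monomial_zero]
    simp
  · refine (totalDegree_monomial_le _ _).trans ?_
    have h1 : Finsupp.single i 1 ≤ d := Finsupp.single_le_iff.2 (Nat.one_le_iff_ne_zero.2 hdi)
    have h2 : (d - Finsupp.single i 1) + Finsupp.single i 1 = d := tsub_add_cancel_of_le h1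
    have h3 : ((d - Finsupp.single i 1).sum fun (_ : Fin 3) (n : ℕ) => n)
        + ((Finsupp.single i 1).sum fun (_ : Fin 3) (n : ℕ) => n) = d.sum fun _ n => n := by
      rw [← Finsupp.sum_add_index' (fun _ => rfl) (fun _ _ _ => rfl), h2]
    have h5 : ((Finsupp.single i 1).sum fun (_ : Fin 3) (n : ℕ) => n) = 1 := by simp
    have h4 : (d.sum fun _ n => n) ≤ n + 1 := (MvPolynomial.le_totalDegree hd).trans h
    show ((d - Finsupp.single i 1).sum fun (_ : Fin 3) (n : ℕ) => n) ≤ n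
    omega

-- degree of shift
theorem tdeg_bind₁_shift_le {p : P3} {n : ℕ} (c : Fin 3 → ℝ) (h : p.totalDegree ≤ n) :
    (bind₁ (fun j => X j + C (c j) : Fin 3 → P3) p).totalDegree ≤ n := by
  conv_lhs => rw [p.as_sum]
  rw [map_sum]
  refine MvPolynomial.totalDegree_finsetSum_le (fun d hd => ?_)
  rw [bind₁_monomial]
  refine (totalDegree_mul _ _).trans ?_
  have h1 : (C (coeff d p) : P3).totalDegree = 0 := totalDegree_C _
  rw [h1, zero_add]
  refine (totalDegree_finset_prod _ _).trans ?_
  calc ∑ j ∈ d.support, ((X j + C (c j) : P3) ^ d j).totalDegree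
      ≤ ∑ j ∈ d.support, d j := by
        refine Finset.sum_le_sum (fun j _ => ?_)
        refine (totalDegree_pow _ _).trans ?_
        have : (X j + C (c j) : P3).totalDegree ≤ 1 :=
          (totalDegree_add _ _).trans (by simp)
        calc d j * (X j + C (c j) : P3).totalDegree ≤ d j * 1 := Nat.mul_le_mul_left _ this
          _ = d j := Nat.mul_one _
    _ = d.sum fun _ n => n := rfl
    _ ≤ n := (MvPolynomial.le_totalDegree hd).trans h

-- chain rule for shift
theorem pderiv_bind₁_shift (c : Fin 3 → ℝ) (i : Fin 3) (p : P3) :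
    pderiv i (bind₁ (fun j => X j + C (c j) : Fin 3 → P3) p)
      = bind₁ (fun j => X j + C (c j) : Fin 3 → P3) (pderiv i p) := by
  induction p using MvPolynomial.induction_on with
  | C a => simp
  | add p q hp hq => simp [map_add, hp, hq]
  | mul_X p j hp =>
      rw [map_mul, pderiv_mul, pderiv_mul, map_add, map_mul, hp, bind₁_X_right]
      by_cases hij : i = j
      · subst hij; simp [pderiv_X_self]
      · rw [pderiv_X_of_ne (Ne.symm hij)]
        simp [pderiv_C, pderiv_X_of_ne, hij, Ne.symm hij]

-- Euler
theorem euler_monomial (d : Fin 3 →₀ ℕ) (a : ℝ) :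
    ∑ i, X i * pderiv i (monomial d a) = (d.sum fun _ n => n) • monomial d a := by
  have : ∀ i : Fin 3, X i * pderiv i (monomial d a) = (d i) • monomial d a := by
    intro i
    rw [pderiv_monomial]
    by_cases hdi : d i = 0
    · simp [hdi]
    · have h1 : Finsupp.single i 1 ≤ d := Finsupp.single_le_iff.2 (Nat.one_le_iff_ne_zero.2 hdi)
      have h2 : (d - Finsupp.single i 1) + Finsupp.single i 1 = d := tsub_add_cancel_of_le h1
      rw [X, monomial_mul,
        show (Finsupp.single i 1) + (d - Finsupp.single i 1) = d from by rw [add_comm, h2],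
        smul_monomial]
      congr 1
      simp [nsmul_eq_mul, mul_comm]
  rw [Finset.sum_congr rfl (fun i _ => this i), ← Finset.sum_smul]
  congr 1
  rw [Finsupp.sum_fintype]
  simp

theorem euler_homogeneous {p : P3} {m : ℕ} (h : p.IsHomogeneous m) :
    ∑ i, X i * pderiv i p = m • p := by
  have hL : ∑ i, X i * pderiv i p
      = ∑ d ∈ p.support, ∑ i : Fin 3, X i * pderiv i (monomial d (coeff d p)) := by
    rw [Finset.sum_comm]
    refine Finset.sum_congr rfl (fun i _ => ?_)
    conv_lhs => rw [p.as_sum]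
    rw [map_sum, Finset.mul_sum]
  rw [hL]
  conv_rhs => rw [p.as_sum]
  rw [Finset.smul_sum]
  refine Finset.sum_congr rfl (fun d hd => ?_)
  rw [euler_monomial]
  congr 1
  have := h (MvPolynomial.mem_support_iff.1 hd)
  change Finsupp.weight (fun _ => 1) d = m at this
  rw [← Finsupp.degree_eq_weight_one] at this
  rw [show (d.sum fun _ n => n) = d.degree from rfl, this]
def curlP (w : Fin 3 → P3) : Fin 3 → P3 :=
  ![pderiv 1 (w 2) - pderiv 2 (w 1),
    pderiv 2 (w 0) - pderiv 0 (w 2),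
    pderiv 0 (w 1) - pderiv 1 (w 0)]

def crossXP (b : Fin 3 → P3) : Fin 3 → P3 :=
  ![X 1 * b 2 - X 2 * b 1, X 2 * b 0 - X 0 * b 2, X 0 * b 1 - X 1 * b 0]

theorem homog_identity (h : Fin 3 → P3) {m : ℕ} (hh : ∀ j, (h j).IsHomogeneous m) (j : Fin 3) :
    pderiv j (∑ i, X i * h i) - crossXP (curlP h) j = ((m : ℝ) + 1) • h j := by
  have e : ∀ l : Fin 3, X 0 * pderiv 0 (h l) + X 1 * pderiv 1 (h l) + X 2 * pderiv 2 (h l)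
      = (m : P3) * h l := by
    intro l
    have := euler_homogeneous (hh l)
    rw [Fin.sum_univ_three] at this
    rw [this, nsmul_eq_mul]
  have hs : (∑ i, X i * h i : P3) = X 0 * h 0 + X 1 * h 1 + X 2 * h 2 := Fin.sum_univ_three _
  have hsm : ∀ l : Fin 3, ((m : ℝ) + 1) • h l = ((m : P3) + 1) * h l := by
    intro l
    rw [smul_eq_C_mul, map_add, map_one, map_natCast]
  obtain rfl | rfl | rfl : j = 0 ∨ j = 1 ∨ j = 2 := by
    fin_cases j
    exacts [Or.inl rfl, Or.inr (Or.inl rfl), Or.inr (Or.inr rfl)]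
  all_goals
  · simp only [crossXP, curlP, hs, hsm _, map_add, map_sub, pderiv_mul, pderiv_X_self,
      Matrix.cons_val_zero, Matrix.cons_val_one, Matrix.head_cons, Matrix.cons_val_two,
      Matrix.tail_cons]
    simp only [show ((pderiv 0) (X 1) : P3) = 0 from pderiv_X_of_ne (by decide),
        show ((pderiv 0) (X 2) : P3) = 0 from pderiv_X_of_ne (by decide),
        show ((pderiv 1) (X 0) : P3) = 0 from pderiv_X_of_ne (by decide),
        show ((pderiv 1) (X 2) : P3) = 0 from pderiv_X_of_ne (by decide),
        show ((pderiv 2) (X 0) : P3) = 0 from pderiv_X_of_ne (by decide),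
        show ((pderiv 2) (X 1) : P3) = 0 from pderiv_X_of_ne (by decide)]
    first
    | linear_combination e 0
    | linear_combination e 1
    | linear_combination e 2
theorem sum_homcomp {p : P3} {n : ℕ} (h : p.totalDegree ≤ n) :
    ∑ m ∈ Finset.range (n + 1), homogeneousComponent m p = p := by
  calc ∑ m ∈ Finset.range (n + 1), homogeneousComponent m p
      = ∑ m ∈ Finset.range (p.totalDegree + 1), homogeneousComponent m p := by
        symm
        apply Finset.sum_subset (Finset.range_subset_range.2 (by omega))
        intro m _ hm
        exact homogeneousComponent_eq_zero m p (by simp only [Finset.mem_range, not_lt] at hm; omega)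
    _ = p := MvPolynomial.sum_homogeneousComponent _

theorem homcomp_of_homog {m n : ℕ} {p : P3} (h : p.IsHomogeneous m) :
    homogeneousComponent n p = if n = m then p else 0 :=
  homogeneousComponent_of_mem ((mem_homogeneousSubmodule _ _).2 h)

theorem grad_poly_zero {G : P3} (h : ∑ i, X i * pderiv i G = 0) (i : Fin 3) :
    pderiv i G = 0 := by
  set D := G.totalDegree with hD
  have hdec : G = ∑ m ∈ Finset.range (D + 1), homogeneousComponent m G :=
    (sum_homcomp le_rfl).symm
  have hE : ∑ m ∈ Finset.range (D + 1), (m • homogeneousComponent m G : P3) = 0 := by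
    calc ∑ m ∈ Finset.range (D + 1), (m • homogeneousComponent m G : P3)
        = ∑ m ∈ Finset.range (D + 1), ∑ i : Fin 3, X i * pderiv i (homogeneousComponent m G) := by
          refine Finset.sum_congr rfl fun m _ => ?_
          rw [euler_homogeneous (homogeneousComponent_isHomogeneous m G)]
      _ = ∑ i : Fin 3, ∑ m ∈ Finset.range (D + 1), X i * pderiv i (homogeneousComponent m G) :=
          Finset.sum_comm
      _ = ∑ i : Fin 3, X i * pderiv i G := by
          refine Finset.sum_congr rfl fun i _ => ?_
          conv_rhs => rw [hdec]
          rw [map_sum, Finset.mul_sum]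
      _ = 0 := h
  have hzero : ∀ n, 1 ≤ n → homogeneousComponent n G = 0 := by
    intro n hn
    by_cases hnD : n ≤ D
    · have h2 := congrArg (homogeneousComponent n) hE
      rw [map_sum, map_zero] at h2
      rw [Finset.sum_eq_single_of_mem n (Finset.mem_range.2 (by omega))] at h2
      · rw [map_nsmul, homcomp_of_homog (homogeneousComponent_isHomogeneous n G),
          if_pos rfl] at h2
        have h3 : (n : ℝ) • homogeneousComponent n G = 0 := by
          rw [Nat.cast_smul_eq_nsmul]; exact h2
        have h5 : homogeneousComponent n G
            = ((n : ℝ)⁻¹ * (n : ℝ)) • homogeneousComponent n G := by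
          rw [inv_mul_cancel₀ (by positivity), one_smul]
        rw [h5, mul_smul, h3, smul_zero]
      · intro m _ hmn
        rw [map_nsmul, homcomp_of_homog (homogeneousComponent_isHomogeneous m G),
          if_neg (Ne.symm hmn), smul_zero]
    · exact homogeneousComponent_eq_zero n G (show G.totalDegree < n by rw [← hD]; omega)
  have hG : G = C (coeff 0 G) := by
    conv_lhs => rw [hdec]
    rw [Finset.sum_eq_single_of_mem 0 (Finset.mem_range.2 (by omega))]
    · exact homogeneousComponent_zero G
    · intro m _ hm
      exact hzero m (by omega)
  rw [hG, pderiv_C]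
lemma fin3_cases (j : Fin 3) : j = 0 ∨ j = 1 ∨ j = 2 := by
  fin_cases j
  exacts [Or.inl rfl, Or.inr (Or.inl rfl), Or.inr (Or.inr rfl)]

lemma crossXP_sum (t : Finset ℕ) (w : ℕ → Fin 3 → P3) (j : Fin 3) :
    crossXP (fun i => ∑ m ∈ t, w m i) j = ∑ m ∈ t, crossXP (w m) j := by
  rcases fin3_cases j with rfl | rfl | rfl <;>
    simp [crossXP, Finset.mul_sum, Finset.sum_sub_distrib]

lemma crossXP_smul (c : ℝ) (w : Fin 3 → P3) (j : Fin 3) :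
    crossXP (fun i => c • w i) j = c • crossXP w j := by
  rcases fin3_cases j with rfl | rfl | rfl <;>
    simp [crossXP, smul_sub, mul_smul_comm]

lemma crossXP_neg (w : Fin 3 → P3) (j : Fin 3) :
    crossXP (fun i => -w i) j = -crossXP w j := by
  rcases fin3_cases j with rfl | rfl | rfl <;>
    (simp [crossXP]; try ring)

-- aeval = eval over ℝ
lemma aeval_eq_eval' (f : Fin 3 → ℝ) (p : P3) : aeval f p = eval f p := by
  rw [← coe_aeval_eq_eval]; rfl

lemma eval_shift (c : Fin 3 → ℝ) (p : P3) (x : Fin 3 → ℝ) :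
    eval x (bind₁ (fun j => X j + C (c j) : Fin 3 → P3) p) = eval (fun l => x l + c l) p := by
  rw [← aeval_eq_eval', aeval_bind₁, ← aeval_eq_eval']
  have h : (fun i => aeval x (X i + C (c i) : P3)) = fun l => x l + c l := by
    funext i
    simp
  rw [h]

lemma shift_cancel (c : Fin 3 → ℝ) (p : P3) :
    bind₁ (fun j => X j + C (-(c j)) : Fin 3 → P3)
      (bind₁ (fun j => X j + C (c j) : Fin 3 → P3) p) = p := by
  rw [bind₁_bind₁]
  have h : (fun i => bind₁ (fun j => X j + C (-(c j)) : Fin 3 → P3) (X i + C (c i)))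
      = (X : Fin 3 → P3) := by
    funext i
    simp [map_add, bind₁_X_right, algHom_C]
  rw [h, bind₁_X_left]
  rfl

theorem poly_decomp' (k : ℕ) (s : Fin 3 → P3) (hs : ∀ i, (s i).totalDegree ≤ k) :
    ∃ (Q : P3) (Rr : Fin 3 → P3), Q.totalDegree ≤ k + 1 ∧
      (if k = 0 then ∀ j, Rr j = (0 : P3) else ∀ j, (Rr j).totalDegree ≤ k - 1) ∧
      ∀ j, s j = pderiv j Q + crossXP Rr j := by
  set hc : ℕ → Fin 3 → P3 := fun m i => homogeneousComponent m (s i) with hhc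
  refine ⟨∑ m ∈ Finset.range (k + 1), ((m : ℝ) + 1)⁻¹ • ∑ i, X i * hc m i,
      fun j => ∑ m ∈ Finset.range (k + 1), ((m : ℝ) + 1)⁻¹ • (-(curlP (hc m) j)), ?_, ?_, ?_⟩
  · refine MvPolynomial.totalDegree_finsetSum_le (fun m hm => ?_)
    refine (totalDegree_smul_le _ _).trans ?_
    refine MvPolynomial.totalDegree_finsetSum_le (fun i _ => ?_)
    refine (totalDegree_mul _ _).trans ?_
    have h1 : (X i : P3).totalDegree ≤ 1 := (totalDegree_X i).le
    have h2 : (hc m i).totalDegree ≤ m := (homogeneousComponent_isHomogeneous m (s i)).totalDegree_le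
    have := Finset.mem_range.1 hm
    omega
  · split_ifs with hk
    · subst hk
      intro j
      have hz : curlP (hc 0) j = 0 := by
        have hC : ∀ i, hc 0 i = C (coeff 0 (s i)) := fun i => homogeneousComponent_zero (s i)
        rcases fin3_cases j with rfl | rfl | rfl <;> simp [curlP, hC, pderiv_C]
      simp [Finset.sum_range_one, hz]
    · intro j
      refine MvPolynomial.totalDegree_finsetSum_le (fun m hm => ?_)
      refine (totalDegree_smul_le _ _).trans ?_
      rw [totalDegree_neg]
      have hpd : ∀ a b : Fin 3, (pderiv a (hc m b)).totalDegree ≤ k - 1 := by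
        intro a b
        refine tdeg_pderiv_le a ?_
        have h2 : (hc m b).totalDegree ≤ m := (homogeneousComponent_isHomogeneous m (s b)).totalDegree_le
        have := Finset.mem_range.1 hm
        omega
      rcases fin3_cases j with rfl | rfl | rfl <;>
      · simp only [curlP, Matrix.cons_val_zero, Matrix.cons_val_one, Matrix.head_cons,
          Matrix.cons_val_two, Matrix.tail_cons]
        exact (totalDegree_sub _ _).trans (max_le (hpd _ _) (hpd _ _))
  · intro j
    rw [map_sum]
    have hterm : ∀ m ∈ Finset.range (k + 1),
        pderiv j (((m : ℝ) + 1)⁻¹ • ∑ i, X i * hc m i)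
          = ((m : ℝ) + 1)⁻¹ • pderiv j (∑ i, X i * hc m i) :=
      fun m _ => (pderiv j).map_smul _ _
    rw [Finset.sum_congr rfl hterm, crossXP_sum]
    have h2 : ∀ m : ℕ, crossXP (fun i => ((m : ℝ) + 1)⁻¹ • (-(curlP (hc m) i))) j
        = ((m : ℝ) + 1)⁻¹ • (-(crossXP (curlP (hc m)) j)) := by
      intro m
      rw [crossXP_smul, crossXP_neg]
    rw [Finset.sum_congr rfl (fun m _ => h2 m), ← Finset.sum_add_distrib]
    have h3 : ∀ m ∈ Finset.range (k + 1),
        ((m : ℝ) + 1)⁻¹ • pderiv j (∑ i, X i * hc m i)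
          + ((m : ℝ) + 1)⁻¹ • (-(crossXP (curlP (hc m)) j)) = hc m j := by
      intro m _
      rw [← smul_add, ← sub_eq_add_neg,
        homog_identity (hc m) (fun i => homogeneousComponent_isHomogeneous m (s i)) j,
        smul_smul, inv_mul_cancel₀ (by positivity), one_smul]
    rw [Finset.sum_congr rfl h3]
    exact (sum_homcomp (hs j)).symm

def crossE (c : V3) (b : Fin 3 → P3) : Fin 3 → P3 :=
  ![(X 1 + C (-(c 1))) * b 2 - (X 2 + C (-(c 2))) * b 1,
    (X 2 + C (-(c 2))) * b 0 - (X 0 + C (-(c 0))) * b 2,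
    (X 0 + C (-(c 0))) * b 1 - (X 1 + C (-(c 1))) * b 0]

lemma eval_crossE (c : V3) (b : Fin 3 → P3) (x : V3) (i : Fin 3) :
    eval x (crossE c b i) = cross3 (x - c) (fun l => eval x (b l)) i := by
  rcases fin3_cases i with rfl | rfl | rfl <;>
  · simp [crossE, cross3]
    ring

lemma tdeg_crossE (c : V3) (b : Fin 3 → P3) (d : ℕ) (hb : ∀ l, (b l).totalDegree ≤ d)
    (i : Fin 3) : (crossE c b i).totalDegree ≤ d + 1 := by
  have hx : ∀ l : Fin 3, (X l + C (-(c l)) : P3).totalDegree ≤ 1 :=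
    fun l => (totalDegree_add _ _).trans (by simp)
  have hm : ∀ l l' : Fin 3, ((X l + C (-(c l))) * b l' : P3).totalDegree ≤ d + 1 := by
    intro l l'
    refine (totalDegree_mul _ _).trans ?_
    have := hx l; have := hb l'; omega
  rcases fin3_cases i with rfl | rfl | rfl <;>
  · simp only [crossE, Matrix.cons_val_zero, Matrix.cons_val_one, Matrix.head_cons,
      Matrix.cons_val_two, Matrix.tail_cons]
    exact (totalDegree_sub _ _).trans (max_le (hm _ _) (hm _ _))

lemma bind₁_crossXP (c : V3) (b : Fin 3 → P3) (j : Fin 3) :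
    bind₁ (fun l => X l + C (-(c l)) : Fin 3 → P3) (crossXP b j)
      = crossE c (fun l => bind₁ (fun l' => X l' + C (-(c l')) : Fin 3 → P3) (b l)) j := by
  rcases fin3_cases j with rfl | rfl | rfl <;>
    simp [crossXP, crossE, map_sub, map_mul, bind₁_X_right]

lemma cross3_zero (a : V3) : cross3 a 0 = 0 := by
  funext i
  rcases fin3_cases i with rfl | rfl | rfl <;> simp [cross3]

lemma sum_mul_cross3 (a b : V3) : ∑ i, a i * cross3 a b i = 0 := by
  rw [Fin.sum_univ_three]
  simp [cross3]
  ring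

-- HELPERS END

set_option maxHeartbeats 1000000 in
/-- P_k(ℝ³;ℝ³) = ∇P_{k+1}(ℝ³) ⊕ ((x − x_K) × P_{k−1}(ℝ³;ℝ³)). -/
theorem stmt0 (k : ℕ) (xK : V3) :
    (∀ v : V3 → V3, IsPolyDegV k v ↔
      ∃ q r, IsPolyDeg (k + 1) q ∧
        (if k = 0 then ∀ x, r x = (0 : V3) else IsPolyDegV (k - 1) r) ∧
        ∀ x, v x = grad q x + cross3 (x - xK) (r x)) ∧
    (∀ q r, IsPolyDeg (k + 1) q →
      (if k = 0 then ∀ x, r x = (0 : V3) else IsPolyDegV (k - 1) r) →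
      (∀ x, grad q x + cross3 (x - xK) (r x) = 0) →
      (∀ x, grad q x = 0) ∧ ∀ x, cross3 (x - xK) (r x) = 0) := by
  constructor
  · intro v
    constructor
    · intro hv
      choose p hdeg hev using hv
      have hev' : ∀ (i : Fin 3) (x : V3), v x i = eval x (p i) := hev
      have hsdeg : ∀ i, ((bind₁ (fun j => X j + C (xK j) : Fin 3 → P3) (p i))).totalDegree ≤ k :=
        fun i => tdeg_bind₁_shift_le _ (hdeg i)
      obtain ⟨Q, Rr, hQ, hR, hid⟩ :=
        poly_decomp' k (fun i => bind₁ (fun j => X j + C (xK j) : Fin 3 → P3) (p i)) hsdeg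
      refine ⟨fun x => eval x (bind₁ (fun j => X j + C (-(xK j)) : Fin 3 → P3) Q),
        fun x j => eval x (bind₁ (fun j => X j + C (-(xK j)) : Fin 3 → P3) (Rr j)),
        ⟨bind₁ (fun j => X j + C (-(xK j)) : Fin 3 → P3) Q,
          tdeg_bind₁_shift_le _ hQ, fun x => rfl⟩, ?_, ?_⟩
      · split_ifs with hk
        · rw [if_pos hk] at hR
          intro x
          funext j
          show eval x (bind₁ (fun j => X j + C (-(xK j)) : Fin 3 → P3) (Rr j)) = (0 : V3) j
          rw [hR j, map_zero, map_zero]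
          rfl
        · rw [if_neg hk] at hR
          intro j
          exact ⟨bind₁ (fun l => X l + C (-(xK l)) : Fin 3 → P3) (Rr j),
            tdeg_bind₁_shift_le _ (hR j), fun x => rfl⟩
      · intro x
        funext j
        have hpoly := congrArg (bind₁ (fun l => X l + C (-(xK l)) : Fin 3 → P3)) (hid j)
        rw [map_add, shift_cancel xK (p j),
          ← pderiv_bind₁_shift (fun l => -(xK l)) j Q, bind₁_crossXP xK Rr j] at hpoly
        have h1 : grad (fun y => eval y (bind₁ (fun l => X l + C (-(xK l)) : Fin 3 → P3) Q)) x j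
            = eval x (pderiv j (bind₁ (fun l => X l + C (-(xK l)) : Fin 3 → P3) Q)) :=
          pd_eval _ j x
        have h2 : cross3 (x - xK)
              (fun l => eval x (bind₁ (fun l' => X l' + C (-(xK l')) : Fin 3 → P3) (Rr l))) j
            = eval x (crossE xK
                (fun l => bind₁ (fun l' => X l' + C (-(xK l')) : Fin 3 → P3) (Rr l)) j) :=
          (eval_crossE _ _ _ _).symm
        show v x j = _
        simp only [Pi.add_apply]
        rw [hev' j x, hpoly, map_add, h1, h2]
    · rintro ⟨q, r, hq, hr, hid⟩
      obtain ⟨Qp, hQdeg, hQev⟩ := hq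
      have hq' : q = fun y => eval y Qp := funext hQev
      intro i
      by_cases hk : k = 0
      · rw [if_pos hk] at hr
        refine ⟨pderiv i Qp, tdeg_pderiv_le i hQdeg, fun x => ?_⟩
        show v x i = _
        rw [hid x]
        simp only [Pi.add_apply]
        rw [hr x, cross3_zero]
        show grad q x i + (0 : V3) i = _
        rw [show (0 : V3) i = 0 from rfl, add_zero]
        show pd i q x = _
        rw [hq', pd_eval]
      · rw [if_neg hk] at hr
        choose Rp hRdeg hRev using hr
        have hRev' : ∀ (l : Fin 3) (x : V3), r x l = eval x (Rp l) := hRev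
        refine ⟨pderiv i Qp + crossE xK Rp i, ?_, fun x => ?_⟩
        · refine (totalDegree_add _ _).trans (max_le (tdeg_pderiv_le i hQdeg) ?_)
          have := tdeg_crossE xK Rp (k - 1) hRdeg i
          omega
        · show v x i = _
          rw [hid x]
          simp only [Pi.add_apply, map_add]
          congr 1
          · show pd i q x = _
            rw [hq', pd_eval]
          · rw [eval_crossE]
            have hrx : r x = fun l => eval x (Rp l) := funext fun l => hRev' l x
            rw [hrx]
  · intro q r hq hr hid
    obtain ⟨Qp, hQdeg, hQev⟩ := hq
    have hq' : q = fun y => eval y Qp := funext hQev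
    have hgradeval : ∀ (x : V3) (i : Fin 3), grad q x i = eval x (pderiv i Qp) := by
      intro x i
      show pd i q x = _
      rw [hq', pd_eval]
    have hDP : (∑ i, (X i + C (-(xK i))) * pderiv i Qp : P3) = 0 := by
      apply MvPolynomial.funext
      intro x
      rw [map_sum, map_zero]
      have hcomp : ∀ i : Fin 3, grad q x i = -(cross3 (x - xK) (r x) i) := by
        intro i
        have h := congrFun (hid x) i
        simp only [Pi.add_apply, Pi.zero_apply] at h
        linarith
      calc ∑ i : Fin 3, eval x ((X i + C (-(xK i))) * pderiv i Qp)
          = ∑ i : Fin 3, (x - xK) i * grad q x i := by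
            refine Finset.sum_congr rfl fun i _ => ?_
            rw [map_mul, map_add, eval_X, eval_C, hgradeval]
            show (x i + -(xK i)) * _ = (x i - xK i) * _
            ring
        _ = ∑ i : Fin 3, -((x - xK) i * cross3 (x - xK) (r x) i) := by
            refine Finset.sum_congr rfl fun i _ => ?_
            rw [hcomp]
            ring
        _ = -(∑ i : Fin 3, (x - xK) i * cross3 (x - xK) (r x) i) := by
            rw [Finset.sum_neg_distrib]
        _ = 0 := by rw [sum_mul_cross3, neg_zero]
    have hG := congrArg (bind₁ (fun j => X j + C (xK j) : Fin 3 → P3)) hDP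
    rw [map_sum, map_zero] at hG
    have hG' : (∑ i, X i * pderiv i (bind₁ (fun j => X j + C (xK j) : Fin 3 → P3) Qp) : P3)
        = 0 := by
      rw [← hG]
      refine Finset.sum_congr rfl fun i _ => ?_
      rw [map_mul, pderiv_bind₁_shift]
      congr 1
      rw [map_add, bind₁_X_right, algHom_C]
      simp only [MvPolynomial.algebraMap_eq, map_neg]
      ring
    have hpz : ∀ i : Fin 3, pderiv i Qp = 0 := by
      intro i
      have h0 := grad_poly_zero hG' i
      have hQp : Qp = bind₁ (fun j => X j + C (-(xK j)) : Fin 3 → P3)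
          (bind₁ (fun j => X j + C (xK j) : Fin 3 → P3) Qp) := (shift_cancel xK Qp).symm
      rw [hQp, pderiv_bind₁_shift, h0, map_zero]
    have hgrad : ∀ x, grad q x = 0 := by
      intro x
      funext i
      show grad q x i = (0 : V3) i
      rw [hgradeval x i, hpz i, map_zero]
      rfl
    exact ⟨hgrad, fun x => by have h := hid x; rwa [hgrad x, zero_add] at h⟩
end
end

section
/- Let K be a tetrahedron with face F_l opposite vertex x_l, barycenter x_K, unit outward normal n_l to F_l, and barycentric coordinates λ's. For i ∈ {1,2} and face-vertex index l_i, define φ_{F_l,i} := (1/4)(8λ_l − 3)(x − x_K) × (n_l × ∇λ_{l_i}) + (1/4)((x_l − x_K)·n_l) ∇λ_{l_i} + (1/16) n_l. Then curl φ_{F_l,i} = 2(1 − 3λ_l) n_l × ∇λ_{l_i}. -/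
open MeasureTheory

noncomputable section

def IsAffine (f : V3 → ℝ) : Prop := ∃ (c : V3) (d : ℝ), ∀ y, f y = dot3 c y + d


lemma pd_const' (i : Fin 3) (c : ℝ) (y : V3) : pd i (fun _ => c) y = 0 := by
  simp [pd]

lemma pd_coord' (i j : Fin 3) (y : V3) : pd i (fun z => z j) y = if j = i then 1 else 0 := by
  unfold pd
  have h : (fun z : V3 => z j) = (ContinuousLinearMap.proj j : V3 →L[ℝ] ℝ) := rfl
  rw [h, ContinuousLinearMap.fderiv]
  simp [Pi.single_apply]

lemma pd_add' (i : Fin 3) (f g : V3 → ℝ) (y : V3) (hf : DifferentiableAt ℝ f y)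
    (hg : DifferentiableAt ℝ g y) :
    pd i (fun z => f z + g z) y = pd i f y + pd i g y := by
  unfold pd; rw [fderiv_fun_add hf hg]; simp

lemma pd_sub' (i : Fin 3) (f g : V3 → ℝ) (y : V3) (hf : DifferentiableAt ℝ f y)
    (hg : DifferentiableAt ℝ g y) :
    pd i (fun z => f z - g z) y = pd i f y - pd i g y := by
  unfold pd; rw [fderiv_fun_sub hf hg]; simp

lemma pd_mul' (i : Fin 3) (f g : V3 → ℝ) (y : V3) (hf : DifferentiableAt ℝ f y)
    (hg : DifferentiableAt ℝ g y) :
    pd i (fun z => f z * g z) y = f y * pd i g y + g y * pd i f y := by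
  unfold pd; rw [fderiv_fun_mul hf hg]; simp [mul_comm]

set_option maxHeartbeats 3000000 in
/-- curl φ_{F_l,i} = 2(1 − 3λ_l) n_l × ∇λ_{l_i}. -/
theorem stmt8 (x : Fin 4 → V3) (hx : AffineIndependent ℝ x)
    (lam : Fin 4 → V3 → ℝ) (haff : ∀ l', IsAffine (lam l'))
    (hdual : ∀ l' m, lam l' (x m) = if l' = m then 1 else 0)
    (xK : V3) (hxK : xK = (4 : ℝ)⁻¹ • (x 0 + x 1 + x 2 + x 3))
    (l li : Fin 4) (hli : li ≠ l)
    (nl : V3) (hnl : ‖nl‖ = 1)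
    -- n_l is normal to the face F_l opposite x l
    (hperp : ∀ a b : Fin 4, a ≠ l → b ≠ l → dot3 nl (x a - x b) = 0)
    -- n_l is the outward normal
    (hout : ∀ a : Fin 4, a ≠ l → dot3 nl (x l - x a) < 0) :
    ∀ y, curl (fun z =>
        ((4 : ℝ)⁻¹ * (8 * lam l z - 3)) • cross3 (z - xK) (cross3 nl (grad (lam li) z))
        + ((4 : ℝ)⁻¹ * dot3 (x l - xK) nl) • grad (lam li) z
        + (16 : ℝ)⁻¹ • nl) y
      = (2 * (1 - 3 * lam l y)) • cross3 nl (grad (lam li) y) := by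
  obtain ⟨cl, dl, hl⟩ := haff l
  obtain ⟨ci, di, hi⟩ := haff li
  -- the gradient of the affine function lam li is the constant vector ci
  have hgrad : ∀ z (j : Fin 3), grad (lam li) z j = ci j := by
    intro z j
    have hlam : lam li = fun u : V3 => ci 0 * u 0 + ci 1 * u 1 + ci 2 * u 2 + di := by
      funext u; rw [hi u]; simp [dot3, Fin.sum_univ_three]
    show pd j (lam li) z = ci j
    rw [hlam]
    simp (disch := fun_prop) only [pd_add', pd_mul', pd_sub', pd_const', pd_coord']
    fin_cases j <;> norm_num [Fin.ext_iff] <;> rfl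
  -- choose the two vertices not equal to l, li
  obtain ⟨m, n, hmn, hml, hmli, hnl2, hnli⟩ :
      ∃ m n : Fin 4, m ≠ n ∧ m ≠ l ∧ m ≠ li ∧ n ≠ l ∧ n ≠ li := by
    have h4 : ∀ a b : Fin 4, b ≠ a →
        ∃ m n : Fin 4, m ≠ n ∧ m ≠ a ∧ m ≠ b ∧ n ≠ a ∧ n ≠ b := by decide
    exact h4 l li hli
  -- dot products with the edge x m - x n vanish
  have dcl : cl 0 * (x m 0 - x n 0) + cl 1 * (x m 1 - x n 1) + cl 2 * (x m 2 - x n 2) = 0 := by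
    have h1 := hdual l m; have h2 := hdual l n
    rw [hl (x m)] at h1; rw [hl (x n)] at h2
    rw [if_neg (Ne.symm hml)] at h1; rw [if_neg (Ne.symm hnl2)] at h2
    simp only [dot3, Fin.sum_univ_three] at h1 h2
    linarith
  have dci : ci 0 * (x m 0 - x n 0) + ci 1 * (x m 1 - x n 1) + ci 2 * (x m 2 - x n 2) = 0 := by
    have h1 := hdual li m; have h2 := hdual li n
    rw [hi (x m)] at h1; rw [hi (x n)] at h2
    rw [if_neg (Ne.symm hmli)] at h1; rw [if_neg (Ne.symm hnli)] at h2
    simp only [dot3, Fin.sum_univ_three] at h1 h2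
    linarith
  have dnl : nl 0 * (x m 0 - x n 0) + nl 1 * (x m 1 - x n 1) + nl 2 * (x m 2 - x n 2) = 0 := by
    have h1 := hperp m n hml hnl2
    simpa [dot3, Fin.sum_univ_three] using h1
  -- triple product vanishes since cl, nl, ci are all orthogonal to a nonzero vector
  have htriple : cl 0 * (nl 1 * ci 2 - nl 2 * ci 1) + cl 1 * (nl 2 * ci 0 - nl 0 * ci 2)
      + cl 2 * (nl 0 * ci 1 - nl 1 * ci 0) = 0 := by
    have hM : (Matrix.of ![cl, nl, ci]).det = 0 := by
      rw [← Matrix.exists_mulVec_eq_zero_iff]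
      refine ⟨x m - x n, sub_ne_zero.2 (hx.injective.ne hmn), ?_⟩
      funext k
      fin_cases k <;>
        simp [Matrix.mulVec, dotProduct, Fin.sum_univ_three, Pi.sub_apply] <;>
        linarith
    rw [Matrix.det_fin_three] at hM
    simp [Matrix.of_apply] at hM
    linear_combination hM
  -- barycentric value at the barycenter
  have hbary : cl 0 * xK 0 + cl 1 * xK 1 + cl 2 * xK 2 + dl = 4⁻¹ := by
    have e : ∀ mm : Fin 4,
        cl 0 * x mm 0 + cl 1 * x mm 1 + cl 2 * x mm 2 + dl = if l = mm then 1 else 0 := by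
      intro mm
      have h1 := hdual l mm
      rw [hl (x mm)] at h1
      simpa [dot3, Fin.sum_univ_three] using h1
    have e0 := e 0; have e1 := e 1; have e2 := e 2; have e3 := e 3
    have hsum : (if l = 0 then (1:ℝ) else 0) + (if l = 1 then (1:ℝ) else 0)
        + (if l = 2 then (1:ℝ) else 0) + (if l = 3 then (1:ℝ) else 0) = 1 := by
      fin_cases l <;> simp
    rw [hxK]
    simp only [Pi.smul_apply, Pi.add_apply, smul_eq_mul]
    linear_combination (4⁻¹:ℝ) * e0 + (4⁻¹:ℝ) * e1 + (4⁻¹:ℝ) * e2 + (4⁻¹:ℝ) * e3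
      + (4⁻¹:ℝ) * hsum
  intro y
  funext j
  fin_cases j
  · simp only [curl, cross3, dot3, hl, hgrad, Pi.add_apply, Pi.smul_apply, Pi.sub_apply,
      smul_eq_mul, Fin.sum_univ_three, Matrix.cons_val_zero, Matrix.cons_val_one,
      Matrix.head_cons, Matrix.cons_val_two, Matrix.tail_cons, Fin.isValue, Fin.mk_one,
      Fin.mk_zero]
    simp (disch := fun_prop) only [pd_add', pd_mul', pd_sub', pd_const', pd_coord']
    norm_num [Fin.ext_iff]
    linear_combination (2*(y 0 - xK 0)) * htriple + (2*(nl 1 * ci 2 - nl 2 * ci 1)) * hbary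
  · simp only [curl, cross3, dot3, hl, hgrad, Pi.add_apply, Pi.smul_apply, Pi.sub_apply,
      smul_eq_mul, Fin.sum_univ_three, Matrix.cons_val_zero, Matrix.cons_val_one,
      Matrix.head_cons, Matrix.cons_val_two, Matrix.tail_cons, Fin.isValue, Fin.mk_one,
      Fin.mk_zero]
    simp (disch := fun_prop) only [pd_add', pd_mul', pd_sub', pd_const', pd_coord']
    norm_num [Fin.ext_iff]
    linear_combination (2*(y 1 - xK 1)) * htriple + (2*(nl 2 * ci 0 - nl 0 * ci 2)) * hbary
  · simp only [curl, cross3, dot3, hl, hgrad, Pi.add_apply, Pi.smul_apply, Pi.sub_apply,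
      smul_eq_mul, Fin.sum_univ_three, Matrix.cons_val_zero, Matrix.cons_val_one,
      Matrix.head_cons, Matrix.cons_val_two, Matrix.tail_cons, Fin.isValue, Fin.mk_one,
      Fin.mk_zero]
    simp (disch := fun_prop) only [pd_add', pd_mul', pd_sub', pd_const', pd_coord']
    norm_num [Fin.ext_iff]
    linear_combination (2*(y 2 - xK 2)) * htriple + (2*(nl 0 * ci 1 - nl 1 * ci 0)) * hbary
end
end

section
/- Let X, Y be real inner product spaces (or Hilbert spaces) and suppose a: X×X → ℝ is a symmetric bounded bilinear form which is coercive on the kernel Z = {v ∈ X : b(v,μ) = 0 ∀μ ∈ Y} of a bounded bilinear form b: X×Y → ℝ satisfying the inf-sup condition inf_{μ∈Y} sup_{v∈X} b(v,μ)/(‖v‖_X ‖μ‖_Y) ≥ β > 0. Then for every (ũ, λ̃) ∈ X×Y, ‖ũ‖_X + ‖λ̃‖_Y ≤ C sup_{(v,μ)∈X×Y, (v,μ)≠0} (a(ũ,v) + b(v,λ̃) + b(ũ,μ))/(‖v‖_X + ‖μ‖_Y), where C depends only on the continuity, coercivity, and inf-sup constants. -/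
set_option maxHeartbeats 1000000
set_option synthInstance.maxHeartbeats 400000

open InnerProductSpace in
private lemma key13 {X Y : Type*} [NormedAddCommGroup X] [InnerProductSpace ℝ X]
    [CompleteSpace X] [NormedAddCommGroup Y] [InnerProductSpace ℝ Y] [CompleteSpace Y]
    (b : X →ₗ[ℝ] Y →ₗ[ℝ] ℝ) (M β : ℝ) (hM : 0 < M) (hβ : 0 < β)
    (hb : ∀ v μ, |b v μ| ≤ M * ‖v‖ * ‖μ‖)
    (hinfsup : ∀ μ : Y, ∃ v : X, v ≠ 0 ∧ β * ‖v‖ * ‖μ‖ ≤ b v μ) (u : X) :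
    ∃ (u₀ u₁ : X) (μ : Y), u = u₀ + u₁ ∧ (∀ ν : Y, b u₀ ν = 0) ∧
      b u₁ μ = ‖u₁‖ ^ 2 ∧ β * ‖μ‖ ≤ ‖u₁‖ := by
  set B : X →L[ℝ] Y →L[ℝ] ℝ := LinearMap.mkContinuous₂ b M
    (fun v μ => by simpa [Real.norm_eq_abs] using hb v μ) with hB
  set T : Y →ₗ[ℝ] X :=
    { toFun := fun μ => (toDual ℝ X).symm (B.flip μ)
      map_add' := fun μ ν => by simp [map_add]
      map_smul' := fun c μ => by simp [map_smul] } with hTdef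
  have hT : ∀ (μ : Y) (v : X), (inner ℝ (T μ) v : ℝ) = b v μ := by
    intro μ v
    show (inner ℝ ((toDual ℝ X).symm (B.flip μ)) v : ℝ) = b v μ
    rw [toDual_symm_apply]
    rfl
  have hlow : ∀ μ : Y, β * ‖μ‖ ≤ ‖T μ‖ := by
    intro μ
    obtain ⟨v, hv0, hv⟩ := hinfsup μ
    have h1 : b v μ ≤ ‖T μ‖ * ‖v‖ := by
      rw [← hT μ v]
      exact (real_inner_le_norm _ _).trans (by rw [mul_comm])
    have hvpos : 0 < ‖v‖ := norm_pos_iff.mpr hv0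
    have := hv.trans h1
    nlinarith
  have huc : UniformContinuous T :=
    ((toDual ℝ X).symm.isometry.uniformContinuous).comp B.flip.uniformContinuous
  have hanti : AntilipschitzWith ⟨β⁻¹, by positivity⟩ T := by
    apply AddMonoidHomClass.antilipschitz_of_bound (T : Y →ₗ[ℝ] X)
    intro μ
    have := hlow μ
    show ‖μ‖ ≤ β⁻¹ * ‖T μ‖
    rw [inv_mul_eq_div, le_div_iff₀ hβ]
    linarith
  have hclosedrange : IsClosed (Set.range T) := hanti.isClosed_range huc
  set R : Submodule ℝ X := LinearMap.range T with hR
  have hRclosed : IsClosed (R : Set X) := by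
    rw [hR, LinearMap.coe_range]
    exact hclosedrange
  set Z : Submodule ℝ X := Rᗮ with hZ
  have hZchar : ∀ v : X, v ∈ Z ↔ ∀ μ : Y, b v μ = 0 := by
    intro v
    rw [hZ, Submodule.mem_orthogonal]
    constructor
    · intro h μ
      rw [← hT μ v]
      exact h (T μ) (LinearMap.mem_range_self T μ)
    · rintro h w ⟨μ, rfl⟩
      rw [hT μ v]
      exact h μ
  have hZperp : Zᗮ = R := by
    rw [hZ, Submodule.orthogonal_orthogonal_eq_closure,
      hRclosed.submodule_topologicalClosure_eq]
  have hZclosed : IsClosed (Z : Set X) := Submodule.isClosed_orthogonal R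
  haveI : CompleteSpace Z := hZclosed.completeSpace_coe
  haveI : Submodule.HasOrthogonalProjection Z := Submodule.HasOrthogonalProjection.ofCompleteSpace Z
  set u₀ : X := (Submodule.orthogonalProjectionOnto Z u : X) with hu₀
  set u₁ : X := u - u₀ with hu₁
  have hu₁mem : u₁ ∈ Zᗮ := by
    rw [hu₁, hu₀]
    exact Submodule.sub_starProjection_mem_orthogonal u
  rw [hZperp] at hu₁mem
  obtain ⟨μ, hμ⟩ := hu₁mem
  refine ⟨u₀, u₁, μ, by rw [hu₁]; abel, ?_, ?_, ?_⟩
  · exact (hZchar u₀).mp (by rw [hu₀]; exact SetLike.coe_mem _)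
  · rw [← hT μ u₁, hμ, real_inner_self_eq_norm_sq]
  · calc β * ‖μ‖ ≤ ‖T μ‖ := hlow μ
      _ = ‖u₁‖ := by rw [hμ]

private lemma sq3 (x y z : ℝ) : (x + y + z) ^ 2 ≤ 3 * (x ^ 2 + y ^ 2 + z ^ 2) := by
  nlinarith [sq_nonneg (x - y), sq_nonneg (y - z), sq_nonneg (x - z)]

private lemma arith13 (M α β s t c x y z : ℝ) (hα : 0 < α)
    (hse : s * (M ^ 2 * (2 + α)) = α * β) (hte : t * α = M ^ 2 + α)
    (hc1 : 2 * c ≤ α) (hc2 : 2 * c ≤ 1) (hc3 : 2 * c ≤ s * β) :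
    c * (x ^ 2 + y ^ 2 + z ^ 2) ≤
      α * x ^ 2 - M * y * x - s * z * (M * (x + y)) + s * z * (β * z) + t * y ^ 2 := by
  have hid : 4 * α * ((α * x ^ 2 - M * y * x - s * z * (M * (x + y)) + s * z * (β * z)
        + t * y ^ 2) - c * (x ^ 2 + y ^ 2 + z ^ 2))
      = (α * x - 2 * M * y) ^ 2 + (α * x - 2 * s * M * z) ^ 2 + 2 * α * (y - s * M * z) ^ 2
        + 2 * α * ((α - 2 * c) * x ^ 2 + (1 - 2 * c) * y ^ 2 + (s * β - 2 * c) * z ^ 2) := by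
    linear_combination (4 * y ^ 2) * hte - (2 * s * z ^ 2) * hse
  have h1 : 0 ≤ 2 * α * ((α - 2 * c) * x ^ 2 + (1 - 2 * c) * y ^ 2 + (s * β - 2 * c) * z ^ 2) := by
    have e1 : 0 ≤ (α - 2 * c) * x ^ 2 := mul_nonneg (by linarith) (sq_nonneg x)
    have e2 : 0 ≤ (1 - 2 * c) * y ^ 2 := mul_nonneg (by linarith) (sq_nonneg y)
    have e3 : 0 ≤ (s * β - 2 * c) * z ^ 2 := mul_nonneg (by linarith) (sq_nonneg z)
    nlinarith
  nlinarith [hid, h1, sq_nonneg (α * x - 2 * M * y), sq_nonneg (α * x - 2 * s * M * z),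
    mul_nonneg hα.le (sq_nonneg (y - s * M * z)), hα]

/-- abstract Babuška–Brezzi stability estimate. -/
theorem stmt13 (X Y : Type*) [NormedAddCommGroup X] [InnerProductSpace ℝ X]
    [CompleteSpace X] [NormedAddCommGroup Y] [InnerProductSpace ℝ Y] [CompleteSpace Y]
    (a : X →ₗ[ℝ] X →ₗ[ℝ] ℝ) (b : X →ₗ[ℝ] Y →ₗ[ℝ] ℝ)
    (M α β : ℝ) (hM : 0 < M) (hα : 0 < α) (hβ : 0 < β)
    (hsym : ∀ u v, a u v = a v u)
    (ha : ∀ u v, |a u v| ≤ M * ‖u‖ * ‖v‖)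
    (hb : ∀ v μ, |b v μ| ≤ M * ‖v‖ * ‖μ‖)
    -- coercivity of a on the kernel Z = {v : b(v,·) = 0}
    (hcoer : ∀ v : X, (∀ μ : Y, b v μ = 0) → α * ‖v‖ ^ 2 ≤ a v v)
    -- inf-sup condition for b with constant β
    (hinfsup : ∀ μ : Y, ∃ v : X, v ≠ 0 ∧ β * ‖v‖ * ‖μ‖ ≤ b v μ) :
    ∃ C : ℝ, 0 < C ∧ ∀ (u : X) (l : Y), ∃ (v : X) (m : Y), ¬(v = 0 ∧ m = 0) ∧
      (‖u‖ + ‖l‖) * (‖v‖ + ‖m‖) ≤ C * (a u v + b v l + b u m) := by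
  have h2α : (0:ℝ) < 2 + α := by linarith
  obtain ⟨s, hs, hse⟩ : ∃ s : ℝ, 0 < s ∧ s * (M ^ 2 * (2 + α)) = α * β :=
    ⟨α * β / (M ^ 2 * (2 + α)), by positivity, by field_simp⟩
  obtain ⟨t, ht, hte⟩ : ∃ t : ℝ, 0 < t ∧ t * α = M ^ 2 + α :=
    ⟨M ^ 2 / α + 1, by positivity, by field_simp⟩
  obtain ⟨c, hc, hc1, hc2, hc3⟩ :
      ∃ c : ℝ, 0 < c ∧ 2 * c ≤ α ∧ 2 * c ≤ 1 ∧ 2 * c ≤ s * β := by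
    refine ⟨min (α / 2) (min (1 / 2) (s * β / 2)),
      lt_min (by positivity) (lt_min (by norm_num) (by positivity)), ?_, ?_, ?_⟩
    · have := min_le_left (α / 2) (min (1 / 2) (s * β / 2)); linarith
    · have := (min_le_right (α / 2) (min (1 / 2) (s * β / 2))).trans
        (min_le_left (1 / 2) (s * β / 2)); linarith
    · have := (min_le_right (α / 2) (min (1 / 2) (s * β / 2))).trans
        (min_le_right (1 / 2) (s * β / 2)); linarith
  obtain ⟨K, hK, hK1, hKs, hKt⟩ :
      ∃ K : ℝ, 0 < K ∧ 1 ≤ K ∧ s ≤ K ∧ t / β ≤ K :=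
    ⟨max 1 (max s (t / β)), lt_of_lt_of_le one_pos (le_max_left _ _), le_max_left _ _,
      (le_max_left s (t / β)).trans (le_max_right _ _),
      (le_max_right s (t / β)).trans (le_max_right _ _)⟩
  refine ⟨3 * K / c, div_pos (by linarith) hc, fun u l => ?_⟩
  by_cases h0 : u = 0 ∧ l = 0
  · obtain ⟨v, hv, -⟩ := hinfsup 0
    refine ⟨v, 0, fun h => hv h.1, ?_⟩
    obtain ⟨rfl, rfl⟩ := h0
    simp
  · obtain ⟨u₀, u₁, μ, hsum, hZ0, hbμ, hμn⟩ := key13 b M β hM hβ hb hinfsup u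
    obtain ⟨w, hw0, hwl⟩ := hinfsup l
    have hwpos : 0 < ‖w‖ := norm_pos_iff.mpr hw0
    set w' : X := ‖w‖⁻¹ • w with hw'def
    have hw'n : ‖w'‖ = 1 := by
      rw [hw'def, norm_smul, norm_inv, norm_norm, inv_mul_cancel₀ hwpos.ne']
    have hw'l : β * ‖l‖ ≤ b w' l := by
      have hb1 : b w' l = ‖w‖⁻¹ * b w l := by
        rw [hw'def, map_smul]; rfl
      have h := mul_le_mul_of_nonneg_left hwl (inv_nonneg.mpr hwpos.le)
      rw [hb1]
      calc β * ‖l‖ = ‖w‖⁻¹ * (β * ‖w‖ * ‖l‖) := by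
            field_simp
        _ ≤ ‖w‖⁻¹ * b w l := h
    set x : ℝ := ‖u₀‖ with hx_def
    set y : ℝ := ‖u₁‖ with hy_def
    set z : ℝ := ‖l‖ with hz_def
    have hx : 0 ≤ x := norm_nonneg _
    have hy : 0 ≤ y := norm_nonneg _
    have hz : 0 ≤ z := norm_nonneg _
    set v : X := u₀ + (s * z) • w' with hv_def
    set m : Y := t • μ with hm_def
    -- expand the bilinear expression
    have hav : a u v = a u u₀ + (s * z) * a u w' := by
      rw [hv_def, map_add, map_smul, smul_eq_mul]
    have hbv : b v l = b u₀ l + (s * z) * b w' l := by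
      rw [hv_def, map_add, map_smul]
      simp only [LinearMap.add_apply, LinearMap.smul_apply, smul_eq_mul]
    have hbm : b u m = t * b u μ := by
      rw [hm_def, map_smul, smul_eq_mul]
    have hS : a u v + b v l + b u m
        = a u u₀ + (s * z) * a u w' + (s * z) * b w' l + t * b u μ := by
      rw [hav, hbv, hbm, hZ0 l]
      ring
    have hbuμ : b u μ = y ^ 2 := by
      rw [hsum, map_add, LinearMap.add_apply, hZ0 μ, hbμ, zero_add]
    have h2 : a u u₀ = a u₀ u₀ + a u₁ u₀ := by
      rw [hsum, map_add, LinearMap.add_apply]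
    have h1 : α * x ^ 2 ≤ a u₀ u₀ := hcoer u₀ hZ0
    have h3 : -(M * y * x) ≤ a u₁ u₀ := by
      have := (abs_le.mp (ha u₁ u₀)).1
      rw [← hx_def, ← hy_def] at this
      linarith
    have hun : ‖u‖ ≤ x + y := by
      rw [hsum]; exact norm_add_le _ _
    have h4 : -(M * (x + y)) ≤ a u w' := by
      have h := (abs_le.mp (ha u w')).1
      rw [hw'n, mul_one] at h
      have : M * ‖u‖ ≤ M * (x + y) := mul_le_mul_of_nonneg_left hun hM.le
      linarith
    -- the core bound
    have hcore : c * (x ^ 2 + y ^ 2 + z ^ 2) ≤ a u v + b v l + b u m := by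
      rw [hS, h2, hbuμ]
      have sznn : 0 ≤ s * z := mul_nonneg hs.le hz
      have e4 : -(s * z * (M * (x + y))) ≤ (s * z) * a u w' := by
        have := mul_le_mul_of_nonneg_left h4 sznn
        linarith
      have e5 : (s * z) * (β * z) ≤ (s * z) * b w' l :=
        mul_le_mul_of_nonneg_left hw'l sznn
      have harith := arith13 M α β s t c x y z hα hse hte hc1 hc2 hc3
      linarith [h1, h3, e4, e5, harith]
    refine ⟨v, m, ?_, ?_⟩
    · rintro ⟨hv0, hm0⟩
      have hzero : a u v + b v l + b u m = 0 := by
        rw [hv0, hm0]; simp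
      rw [hzero] at hcore
      have hSig : x ^ 2 + y ^ 2 + z ^ 2 ≤ 0 := by
        by_contra hpos
        push_neg at hpos
        exact absurd hcore (not_le.mpr (mul_pos hc hpos))
      have two_ne : (2:ℕ) ≠ 0 := by norm_num
      have hx0 : x = 0 := by
        have : x ^ 2 ≤ 0 := by linarith [sq_nonneg y, sq_nonneg z]
        exact pow_eq_zero_iff two_ne |>.mp (le_antisymm this (sq_nonneg x))
      have hy0 : y = 0 := by
        have : y ^ 2 ≤ 0 := by linarith [sq_nonneg x, sq_nonneg z]
        exact pow_eq_zero_iff two_ne |>.mp (le_antisymm this (sq_nonneg y))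
      have hz0 : z = 0 := by
        have : z ^ 2 ≤ 0 := by linarith [sq_nonneg x, sq_nonneg y]
        exact pow_eq_zero_iff two_ne |>.mp (le_antisymm this (sq_nonneg z))
      have hu0 : u = 0 := by
        rw [hsum, norm_eq_zero.mp hx0, norm_eq_zero.mp hy0, add_zero]
      exact h0 ⟨hu0, norm_eq_zero.mp hz0⟩
    · -- assemble the final estimate
      have hul : ‖u‖ + ‖l‖ ≤ x + y + z := by
        rw [← hz_def]; linarith
      have hμnorm : ‖μ‖ ≤ y / β := by
        rw [le_div_iff₀ hβ]; linarith [hμn]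
      have hvn : ‖v‖ ≤ x + s * z := by
        rw [hv_def]
        calc ‖u₀ + (s * z) • w'‖ ≤ ‖u₀‖ + ‖(s * z) • w'‖ := norm_add_le _ _
          _ = x + |s * z| * 1 := by rw [norm_smul, hw'n, Real.norm_eq_abs, ← hx_def]
          _ = x + s * z := by rw [abs_of_nonneg (mul_nonneg hs.le hz), mul_one]
      have hmn : ‖m‖ ≤ t * (y / β) := by
        rw [hm_def, norm_smul, Real.norm_eq_abs, abs_of_nonneg ht.le]
        exact mul_le_mul_of_nonneg_left hμnorm ht.le
      have hvm : ‖v‖ + ‖m‖ ≤ K * (x + y + z) := by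
        have e1 : x + s * z + t * (y / β) ≤ K * x + K * y + K * z := by
          have b1 : x ≤ K * x := le_mul_of_one_le_left hx hK1
          have b2 : s * z ≤ K * z := mul_le_mul_of_nonneg_right hKs hz
          have b3 : t * (y / β) ≤ K * y := by
            have : t * (y / β) = (t / β) * y := by ring
            rw [this]
            exact mul_le_mul_of_nonneg_right hKt hy
          linarith
        calc ‖v‖ + ‖m‖ ≤ x + s * z + t * (y / β) := by linarith
          _ ≤ K * x + K * y + K * z := e1
          _ = K * (x + y + z) := by ring
      have hxyznn : 0 ≤ x + y + z := by linarith
      have hsq : (x + y + z) ^ 2 ≤ 3 * (x ^ 2 + y ^ 2 + z ^ 2) := sq3 x y z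
      have step1 : (‖u‖ + ‖l‖) * (‖v‖ + ‖m‖) ≤ (x + y + z) * (K * (x + y + z)) :=
        mul_le_mul hul hvm (add_nonneg (norm_nonneg _) (norm_nonneg _)) hxyznn
      have step2 : (x + y + z) * (K * (x + y + z)) ≤ 3 * K * (x ^ 2 + y ^ 2 + z ^ 2) := by
        have h := mul_le_mul_of_nonneg_left hsq hK.le
        calc (x + y + z) * (K * (x + y + z)) = K * (x + y + z) ^ 2 := by ring
          _ ≤ K * (3 * (x ^ 2 + y ^ 2 + z ^ 2)) := h
          _ = 3 * K * (x ^ 2 + y ^ 2 + z ^ 2) := by ring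
      have step3 : 3 * K * (x ^ 2 + y ^ 2 + z ^ 2) ≤ (3 * K / c) * (a u v + b v l + b u m) := by
        have h := mul_le_mul_of_nonneg_left hcore
          (le_of_lt (div_pos (by linarith : (0:ℝ) < 3 * K) hc))
        have : (3 * K / c) * (c * (x ^ 2 + y ^ 2 + z ^ 2)) = 3 * K * (x ^ 2 + y ^ 2 + z ^ 2) := by
          field_simp
        linarith [this ▸ h]
      linarith
end

section
/- Let K be a tetrahedron, x_K its barycenter, and h_K its diameter. Define the Poincaré operator K_K(q)(x) = −(x − x_K) × ∫₀¹ t q(t(x−x_K)+x_K) dt for q ∈ P₁(K;ℝ³). Then there exists a constant C independent of K (depending only on shape regularity) such that ‖K_K q‖_{L²(K)} ≤ C h_K ‖q‖_{L²(K)} for all q ∈ P₁(K;ℝ³). -/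
open MeasureTheory

noncomputable section

lemma finsupp_cases (m : Fin 3 →₀ ℕ) (h : (m.sum fun _ e => e) ≤ 1) :
    m = 0 ∨ ∃ j, m = Finsupp.single j 1 := by
  have hs : (m.sum fun _ e => e) = ∑ j : Fin 3, m j := Finsupp.sum_fintype _ _ (fun _ => rfl)
  rw [hs, Fin.sum_univ_three] at h
  have hcase : (m 0 = 0 ∧ m 1 = 0 ∧ m 2 = 0) ∨ (m 0 = 1 ∧ m 1 = 0 ∧ m 2 = 0)
      ∨ (m 0 = 0 ∧ m 1 = 1 ∧ m 2 = 0) ∨ (m 0 = 0 ∧ m 1 = 0 ∧ m 2 = 1) := by omega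
  rcases hcase with ⟨h0,h1,h2⟩ | ⟨h0,h1,h2⟩ | ⟨h0,h1,h2⟩ | ⟨h0,h1,h2⟩
  · left; ext j; fin_cases j <;> simp_all
  · right; exact ⟨0, by ext j; fin_cases j <;> simp_all⟩
  · right; exact ⟨1, by ext j; fin_cases j <;> simp_all⟩
  · right; exact ⟨2, by ext j; fin_cases j <;> simp_all⟩

lemma poly_aff (p : MvPolynomial (Fin 3) ℝ) (hp : p.totalDegree ≤ 1) :
    ∀ x : V3, MvPolynomial.eval x p =
      MvPolynomial.coeff 0 p + ∑ j, MvPolynomial.coeff (Finsupp.single j 1) p * x j := by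
  intro x
  have hrep : p = MvPolynomial.C (MvPolynomial.coeff 0 p)
      + ∑ j, MvPolynomial.C (MvPolynomial.coeff (Finsupp.single j 1) p) * MvPolynomial.X j := by
    ext m
    rcases eq_or_ne m 0 with rfl | hm0
    · simp [MvPolynomial.coeff_sum, MvPolynomial.coeff_C_mul, MvPolynomial.coeff_X',
        Finsupp.single_eq_zero]
    rcases em (∃ j, m = Finsupp.single j 1) with ⟨j, rfl⟩ | hms
    · rw [MvPolynomial.coeff_add, MvPolynomial.coeff_C, MvPolynomial.coeff_sum]
      simp only [MvPolynomial.coeff_C_mul, MvPolynomial.coeff_X']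
      rw [Finset.sum_eq_single j]
      · rw [if_neg, if_pos rfl, mul_one, zero_add]
        intro h; exact hm0 h.symm
      · intro b _ hb
        rw [if_neg, mul_zero]
        intro h
        exact hb (by simpa [Finsupp.single_left_inj] using h)
      · simp
    · have hm : MvPolynomial.coeff m p = 0 := by
        by_contra hc
        have hmem : m ∈ p.support := by simpa [MvPolynomial.mem_support_iff] using hc
        have := (MvPolynomial.le_totalDegree hmem).trans hp
        rcases finsupp_cases m this with rfl | ⟨j, rfl⟩
        · exact hm0 rfl
        · exact hms ⟨j, rfl⟩
      rw [hm, MvPolynomial.coeff_add, MvPolynomial.coeff_C, MvPolynomial.coeff_sum]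
      simp only [MvPolynomial.coeff_C_mul, MvPolynomial.coeff_X']
      rw [Finset.sum_eq_zero, if_neg (Ne.symm hm0), add_zero]
      intro j _
      rw [if_neg, mul_zero]
      intro hj; exact hms ⟨j, hj.symm⟩
  conv_lhs => rw [hrep]
  simp [MvPolynomial.eval_sum]

lemma cross3_norm_le (a b : V3) : ‖cross3 a b‖ ≤ 2 * ‖a‖ * ‖b‖ := by
  have hab : ∀ (i j k l : Fin 3), |a i * b j - a k * b l| ≤ 2 * ‖a‖ * ‖b‖ := by
    intro i j k l
    have h1 : |a i| * |b j| ≤ ‖a‖ * ‖b‖ := by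
      apply mul_le_mul _ _ (abs_nonneg _) (norm_nonneg _)
      · simpa [Real.norm_eq_abs] using norm_le_pi_norm a i
      · simpa [Real.norm_eq_abs] using norm_le_pi_norm b j
    have h2 : |a k| * |b l| ≤ ‖a‖ * ‖b‖ := by
      apply mul_le_mul _ _ (abs_nonneg _) (norm_nonneg _)
      · simpa [Real.norm_eq_abs] using norm_le_pi_norm a k
      · simpa [Real.norm_eq_abs] using norm_le_pi_norm b l
    calc |a i * b j - a k * b l| ≤ |a i * b j| + |a k * b l| := abs_sub _ _
    _ = |a i| * |b j| + |a k| * |b l| := by rw [abs_mul, abs_mul]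
    _ ≤ 2 * ‖a‖ * ‖b‖ := by nlinarith [h1, h2]
  rw [pi_norm_le_iff_of_nonneg (by positivity)]
  intro i
  fin_cases i <;> simpa [cross3, Real.norm_eq_abs] using hab _ _ _ _

lemma vec_aff {q : V3 → V3} (hq : IsPolyDegV 1 q) :
    ∃ (a : V3) (b : Fin 3 → V3), ∀ y i, q y i = a i + ∑ j, b i j * y j := by
  choose p hdeg hval using hq
  exact ⟨fun i => MvPolynomial.coeff 0 (p i),
    fun i j => MvPolynomial.coeff (Finsupp.single j 1) (p i),
    fun y i => by simpa using (hval i y).trans (poly_aff (p i) (hdeg i) y)⟩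

set_option maxHeartbeats 1000000 in
/-- ‖K_K q‖_{L²(K)} ≤ C h_K ‖q‖_{L²(K)} for q ∈ P₁(K;ℝ³), with C
depending only on the shape-regularity constant γ (h_K³ ≤ γ|K|). -/
theorem stmt14 (γ : ℝ) (hγ : 0 < γ) :
    ∃ C : ℝ, 0 < C ∧ ∀ x : Fin 4 → V3, AffineIndependent ℝ x →
      ∀ K : Set V3, K = convexHull ℝ (Set.range x) →
      ∀ hK : ℝ, hK = Metric.diam K →
      hK ^ 3 ≤ γ * (volume K).toReal →
      ∀ xK : V3, xK = (4 : ℝ)⁻¹ • (x 0 + x 1 + x 2 + x 3) →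
      ∀ q : V3 → V3, IsPolyDegV 1 q →
      (∫ y in K, ‖PoincareOp xK q y‖ ^ 2) ≤ C ^ 2 * hK ^ 2 * ∫ y in K, ‖q y‖ ^ 2 := by
  refine ⟨3, by norm_num, ?_⟩
  intro x hx K hKdef hK hKdiam hshape xK hxKdef q hq
  obtain ⟨a, b, hab⟩ := vec_aff hq
  -- continuity of q
  have hqc : Continuous q := by
    apply continuous_pi
    intro i
    have : (fun y => q y i) = fun y : V3 => a i + ∑ j, b i j * y j := by
      funext y; exact hab y i
    rw [this]; fun_prop
  -- affinity of q
  have haff : ∀ (c d : ℝ) (u v : V3), c + d = 1 → q (c • u + d • v) = c • q u + d • q v := by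
    intro c d u v hcd
    funext i
    simp only [hab, Pi.add_apply, Pi.smul_apply, smul_eq_mul]
    have h1 : ∑ j, b i j * (c * u j + d * v j)
        = c * ∑ j, b i j * u j + d * ∑ j, b i j * v j := by
      rw [Finset.mul_sum, Finset.mul_sum, ← Finset.sum_add_distrib]
      exact Finset.sum_congr rfl (fun j _ => by ring)
    rw [h1]
    linear_combination (-(a i)) * hcd
  -- basic compactness
  have hKcomp : IsCompact K := by
    rw [hKdef]; exact (Set.finite_range x).isCompact_convexHull ℝ
  have hKconv : Convex ℝ K := by rw [hKdef]; exact convex_convexHull ℝ _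
  have hKmeas : MeasurableSet K := hKcomp.measurableSet
  have hxKmem : xK ∈ K := by
    have : xK = ∑ i : Fin 4, (4:ℝ)⁻¹ • x i := by
      rw [hxKdef, Fin.sum_univ_four]
      simp [smul_add]
    rw [this]
    refine hKconv.sum_mem (fun i _ => by norm_num) (by simp [Finset.sum_const])
      (fun i _ => by rw [hKdef]; exact subset_convexHull ℝ _ ⟨i, rfl⟩)
  -- closed form of the Poincare operator
  have hclosed : ∀ y : V3, PoincareOp xK q y
      = - cross3 (y - xK) ((3:ℝ)⁻¹ • q y + (6:ℝ)⁻¹ • q xK) := by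
    intro y
    have key : (fun t : ℝ => t • q (t • (y - xK) + xK))
        = fun t : ℝ => t • q xK + (t ^ 2) • (q y - q xK) := by
      funext t
      funext i
      simp only [hab, Pi.add_apply, Pi.smul_apply, Pi.sub_apply, smul_eq_mul]
      have hs : ∑ j, b i j * (t * (y j - xK j) + xK j)
          = (∑ j, b i j * xK j) + t * ((∑ j, b i j * y j) - (∑ j, b i j * xK j)) := by
        calc ∑ j, b i j * (t * (y j - xK j) + xK j)
            = ∑ j, (b i j * xK j + t * (b i j * y j - b i j * xK j)) :=
              Finset.sum_congr rfl (fun j _ => by ring)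
          _ = _ := by rw [Finset.sum_add_distrib, ← Finset.mul_sum, Finset.sum_sub_distrib]
      rw [hs]; ring
    have hint : (∫ t in (0:ℝ)..1, t • q (t • (y - xK) + xK))
        = (2:ℝ)⁻¹ • q xK + (3:ℝ)⁻¹ • (q y - q xK) := by
      rw [key, intervalIntegral.integral_add, intervalIntegral.integral_smul_const,
        intervalIntegral.integral_smul_const, integral_id, integral_pow]
      · norm_num
      · exact Continuous.intervalIntegrable (by fun_prop) 0 1
      · exact Continuous.intervalIntegrable (by fun_prop) 0 1
    rw [PoincareOp, hint]
    have heq : (2:ℝ)⁻¹ • q xK + (3:ℝ)⁻¹ • (q y - q xK) = (3:ℝ)⁻¹ • q y + (6:ℝ)⁻¹ • q xK := by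
      funext i
      simp only [Pi.add_apply, Pi.smul_apply, Pi.sub_apply, smul_eq_mul]
      ring
    rw [heq]
  -- homothety
  set φ : V3 → V3 := fun y => (-(3:ℝ)⁻¹) • y + ((4:ℝ) * 3⁻¹) • xK with hφdef
  have hφK : ∀ y ∈ K, φ y ∈ K := by
    have hvert : ∀ i : Fin 4, φ (x i) ∈ K := by
      intro i
      have hrep : φ (x i) = ∑ j : Fin 4, (if j = i then (0:ℝ) else 3⁻¹) • x j := by
        have h0 : φ (x i) = (-(3:ℝ)⁻¹) • (x i) + ((4:ℝ) * 3⁻¹) • xK := rfl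
        rw [h0, hxKdef]
        fin_cases i <;> simp [Fin.sum_univ_four] <;> module
      rw [hrep]
      refine hKconv.sum_mem (fun j _ => by split <;> norm_num) ?_
        (fun j _ => by rw [hKdef]; exact subset_convexHull ℝ _ ⟨j, rfl⟩)
      fin_cases i <;> simp [Fin.sum_univ_four] <;> norm_num
    intro y hy
    rw [hKdef] at hy
    have hφaffmap : ∃ A : V3 →ᵃ[ℝ] V3, ∀ v, A v = φ v := by
      refine ⟨AffineMap.const ℝ V3 (((4:ℝ)*3⁻¹) • xK) +ᵥ
        ((-(3:ℝ)⁻¹) • (LinearMap.id : V3 →ₗ[ℝ] V3)).toAffineMap, fun v => ?_⟩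
      simp [hφdef, add_comm]
    obtain ⟨A, hA⟩ := hφaffmap
    have : φ y ∈ A '' (convexHull ℝ (Set.range x)) := ⟨y, hy, hA y⟩
    rw [AffineMap.image_convexHull] at this
    refine convexHull_min ?_ hKconv this
    rintro - ⟨-, ⟨i, rfl⟩, rfl⟩
    rw [hA]
    exact hvert i
  have hφaff : ∀ y : V3, xK = (4:ℝ)⁻¹ • y + ((3:ℝ)*4⁻¹) • φ y := by
    intro y; funext i
    simp only [hφdef, Pi.add_apply, Pi.smul_apply, smul_eq_mul]
    ring
  set g : V3 → ℝ := fun y => ‖q y‖ ^ 2 with hgdef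
  have hgc : Continuous g := by fun_prop
  have hgnn : ∀ y, 0 ≤ g y := fun y => by positivity
  have hgint : IntegrableOn g K := hgc.continuousOn.integrableOn_compact hKcomp
  have hgφint : IntegrableOn (fun y => g (φ y)) K :=
    (hgc.comp (by fun_prop)).continuousOn.integrableOn_compact hKcomp
  set I := ∫ y in K, g y with hIdef
  have hInn : 0 ≤ I := setIntegral_nonneg hKmeas (fun y _ => hgnn y)
  -- change of variables
  have hcov : (∫ y in K, g (φ y)) ≤ 27 * I := by
    have hderiv : ∀ y ∈ K, HasFDerivWithinAt φ ((-(3:ℝ)⁻¹) • ContinuousLinearMap.id ℝ V3) K y := by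
      intro y _
      exact (((hasFDerivAt_id y).const_smul (-(3:ℝ)⁻¹)).add_const
        (((4:ℝ)*3⁻¹) • xK)).hasFDerivWithinAt
    have hinj : Set.InjOn φ K := by
      intro u _ v _ h
      simp only [hφdef] at h
      have := add_right_cancel h
      exact smul_right_injective V3 (by norm_num) this
    have hcv := integral_image_eq_integral_abs_det_fderiv_smul volume hKmeas hderiv hinj g
    have hdet : ((-(3:ℝ)⁻¹) • ContinuousLinearMap.id ℝ V3).det = -27⁻¹ := by
      have : ((-(3:ℝ)⁻¹) • ContinuousLinearMap.id ℝ V3).det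
          = LinearMap.det ((-(3:ℝ)⁻¹) • (LinearMap.id : V3 →ₗ[ℝ] V3)) := rfl
      rw [this, LinearMap.det_smul, LinearMap.det_id, Module.finrank_pi]
      norm_num
    rw [hdet] at hcv
    simp only [smul_eq_mul, abs_neg, abs_inv, abs_of_nonneg (by norm_num : (0:ℝ) ≤ (27:ℝ))] at hcv
    rw [integral_const_mul] at hcv
    have himg : (∫ y in φ '' K, g y) ≤ I := by
      refine setIntegral_mono_set hgint ?_ ?_
      · exact Filter.Eventually.of_forall (fun y => hgnn y)
      · exact HasSubset.Subset.eventuallyLE (Set.image_subset_iff.mpr hφK)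
    have h27 : (∫ y in K, g (φ y)) = 27 * ∫ y in φ '' K, g y := by
      rw [hcv]; ring
    rw [h27]
    linarith [himg]
  -- average bound
  have havg : ∀ y ∈ K, ‖q xK‖ ^ 2 ≤ (1/8) * g y + (9/8) * g (φ y) := by
    intro y hy
    have h1 : q xK = (4:ℝ)⁻¹ • q y + ((3:ℝ)*4⁻¹) • q (φ y) := by
      rw [← haff _ _ _ _ (by norm_num), ← hφaff y]
    have h2 : ‖q xK‖ ≤ (4:ℝ)⁻¹ * ‖q y‖ + ((3:ℝ)*4⁻¹) * ‖q (φ y)‖ := by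
      rw [h1]
      refine (norm_add_le _ _).trans ?_
      rw [norm_smul, norm_smul]
      simp [Real.norm_eq_abs, abs_of_nonneg]
    have ht : ‖q xK‖ ^ 2 ≤ ((4:ℝ)⁻¹ * ‖q y‖ + ((3:ℝ)*4⁻¹) * ‖q (φ y)‖) ^ 2 :=
      pow_le_pow_left₀ (norm_nonneg _) h2 2
    simp only [hgdef]
    nlinarith [ht, sq_nonneg (‖q y‖ - 3 * ‖q (φ y)‖)]
  have hvol : a = a := rfl
  -- volume times point value bound
  have hpt : ‖q xK‖ ^ 2 * (volume K).toReal ≤ (1/8) * I + (9/8) * (∫ y in K, g (φ y)) := by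
    have h0 : ∫ (_ : V3) in K, ‖q xK‖ ^ 2 = ‖q xK‖ ^ 2 * (volume K).toReal := by
      simp [setIntegral_const, mul_comm, measureReal_def]
    rw [← h0]
    have h1 : (∫ (_ : V3) in K, ‖q xK‖ ^ 2)
        ≤ ∫ y in K, ((1/8) * g y + (9/8) * g (φ y)) := by
      refine setIntegral_mono_on (integrableOn_const hKcomp.measure_lt_top.ne)
        ((hgint.const_mul _).add (hgφint.const_mul _)) hKmeas havg
    rw [integral_add (hgint.const_mul _) (hgφint.const_mul _),
      integral_const_mul, integral_const_mul] at h1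
    exact h1
  -- pointwise bound on the Poincare operator
  have hpw : ∀ y ∈ K, ‖PoincareOp xK q y‖ ^ 2
      ≤ hK ^ 2 * ((8/9) * g y + (2/9) * ‖q xK‖ ^ 2) := by
    intro y hy
    have hdist : ‖y - xK‖ ≤ hK := by
      rw [hKdiam, ← dist_eq_norm]
      exact Metric.dist_le_diam_of_mem hKcomp.isBounded hy hxKmem
    have hM : ‖(3:ℝ)⁻¹ • q y + (6:ℝ)⁻¹ • q xK‖ ≤ (3:ℝ)⁻¹ * ‖q y‖ + (6:ℝ)⁻¹ * ‖q xK‖ := by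
      refine (norm_add_le _ _).trans ?_
      rw [norm_smul, norm_smul]
      simp [Real.norm_eq_abs]
    have hb : ‖PoincareOp xK q y‖ ≤ 2 * ‖y - xK‖ * ‖(3:ℝ)⁻¹ • q y + (6:ℝ)⁻¹ • q xK‖ := by
      rw [hclosed y, norm_neg]
      exact cross3_norm_le _ _
    have h0 : (0:ℝ) ≤ ‖y - xK‖ := norm_nonneg _
    have hKnn0 : (0:ℝ) ≤ hK := le_trans h0 hdist
    have h1 := norm_nonneg (q y); have h2 := norm_nonneg (q xK)
    have h4 := norm_nonneg ((3:ℝ)⁻¹ • q y + (6:ℝ)⁻¹ • q xK)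
    have hPm : ‖PoincareOp xK q y‖ ≤ 2 * hK * ((3:ℝ)⁻¹ * ‖q y‖ + (6:ℝ)⁻¹ * ‖q xK‖) := by
      refine hb.trans ?_
      gcongr
    have hsq : ‖PoincareOp xK q y‖ ^ 2
        ≤ (2 * hK * ((3:ℝ)⁻¹ * ‖q y‖ + (6:ℝ)⁻¹ * ‖q xK‖)) ^ 2 :=
      pow_le_pow_left₀ (norm_nonneg _) hPm 2
    simp only [hgdef]
    nlinarith [hsq, mul_nonneg (sq_nonneg hK) (sq_nonneg (2 * ‖q y‖ - ‖q xK‖))]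
  -- integrate the pointwise bound
  have hLHSint : IntegrableOn (fun y => ‖PoincareOp xK q y‖ ^ 2) K := by
    have hcont : Continuous (fun y => ‖PoincareOp xK q y‖ ^ 2) := by
      have h1 : Continuous (fun y : V3 => - cross3 (y - xK) ((3:ℝ)⁻¹ • q y + (6:ℝ)⁻¹ • q xK)) := by
        apply Continuous.neg
        apply continuous_pi
        intro i
        have hc : ∀ j : Fin 3, Continuous fun y : V3 => (y - xK) j := by fun_prop
        have hd : ∀ j : Fin 3, Continuous fun y : V3 => ((3:ℝ)⁻¹ • q y + (6:ℝ)⁻¹ • q xK) j := by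
          intro j
          have : Continuous (fun y => q y j) := (continuous_apply j).comp hqc
          fun_prop
        fin_cases i <;> simp only [cross3, Matrix.cons_val_zero, Matrix.cons_val_one,
          Matrix.head_cons, Matrix.cons_val_two, Matrix.tail_cons] <;>
          exact ((hc _).mul (hd _)).sub ((hc _).mul (hd _))
      have : (fun y => ‖PoincareOp xK q y‖ ^ 2)
          = fun y => ‖- cross3 (y - xK) ((3:ℝ)⁻¹ • q y + (6:ℝ)⁻¹ • q xK)‖ ^ 2 := by
        funext y; rw [hclosed y]
      rw [this]
      exact (h1.norm).pow 2
    exact hcont.continuousOn.integrableOn_compact hKcomp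
  have hmain : (∫ y in K, ‖PoincareOp xK q y‖ ^ 2)
      ≤ hK ^ 2 * ((8/9) * I + (2/9) * (‖q xK‖ ^ 2 * (volume K).toReal)) := by
    have h1 : (∫ y in K, ‖PoincareOp xK q y‖ ^ 2)
        ≤ ∫ y in K, (hK ^ 2 * ((8/9) * g y + (2/9) * ‖q xK‖ ^ 2)) := by
      refine setIntegral_mono_on hLHSint ?_ hKmeas hpw
      exact ((hgint.const_mul _).add (integrableOn_const hKcomp.measure_lt_top.ne)).const_mul _
    refine h1.trans_eq ?_
    rw [integral_const_mul, integral_add (hgint.const_mul _)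
      (integrableOn_const hKcomp.measure_lt_top.ne), integral_const_mul,
      setIntegral_const, smul_eq_mul, measureReal_def]
    ring
  -- combine
  have hKnn : (0:ℝ) ≤ hK := by rw [hKdiam]; exact Metric.diam_nonneg
  calc (∫ y in K, ‖PoincareOp xK q y‖ ^ 2)
      ≤ hK ^ 2 * ((8/9) * I + (2/9) * (‖q xK‖ ^ 2 * (volume K).toReal)) := hmain
    _ ≤ hK ^ 2 * ((8/9) * I + (2/9) * ((1/8) * I + (9/8) * (27 * I)))  := by
        have h27 := hcov
        nlinarith [sq_nonneg hK, hpt, hcov, hInn]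
    _ ≤ 3 ^ 2 * hK ^ 2 * I := by nlinarith [sq_nonneg hK, hInn]
end
end
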